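/- Let L > 0, d2 > 0, a > 0 with L ≤ sqrt(d2/a)·π, and let (u, v) be a pair of twice continuously differentiable nonnegative functions on [0, L] satisfying d2 v''(x) + v(x)(a - v(x) - k2 u(x)) = 0 on (0, L) with v(0) = v(L) = 0, where k2 ≥ 0. Then v ≡ 0 on [0, L]. -/

import Mathlib

open Real Set MeasureTheory intervalIntegral

lemma phi_hasDeriv (c x : ℝ) :
    HasDerivAt (fun y => Real.sin (c*y)) (Real.cos (c*x) * c) x := by
  simpa [Function.comp_def] using (Real.hasDerivAt_sin (c*x)).comp x ((hasDerivAt_id x).const_mul c)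

lemma phi1_hasDeriv (c x : ℝ) :
    HasDerivAt (fun y => Real.cos (c*y) * c) (-Real.sin (c*x) * c * c) x := by
  simpa using ((Real.hasDerivAt_cos (c*x)).comp x ((hasDerivAt_id x).const_mul c)).mul_const c

theorem small_domain_forces_v_zero
    (L d2 a k2 : ℝ) (hL : 0 < L) (hd2 : 0 < d2) (ha : 0 < a) (hk2 : 0 ≤ k2)
    (hLle : L ≤ Real.sqrt (d2 / a) * π)
    (u v : ℝ → ℝ) (hu : ContDiff ℝ 2 u) (hv : ContDiff ℝ 2 v)
    (hu0 : ∀ x ∈ Icc (0 : ℝ) L, 0 ≤ u x) (hv0 : ∀ x ∈ Icc (0 : ℝ) L, 0 ≤ v x)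
    (heq : ∀ x ∈ Ioo (0 : ℝ) L,
      d2 * deriv (deriv v) x + v x * (a - v x - k2 * u x) = 0)
    (hb0 : v 0 = 0) (hbL : v L = 0) :
    ∀ x ∈ Icc (0 : ℝ) L, v x = 0 := by
  have hc : 0 < π / L := div_pos Real.pi_pos hL
  set c : ℝ := π / L with hcdef
  have hcL : c * L = π := by rw [hcdef, div_mul_cancel₀ _ hL.ne']
  -- regularity facts
  have h2 : ContDiff ℝ (1+1) v := by rw [one_add_one_eq_two]; exact hv
  have h1 : ContDiff ℝ 1 (deriv v) := (contDiff_succ_iff_deriv.mp h2).2.2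
  have hv1 : Differentiable ℝ v := (contDiff_succ_iff_deriv.mp h2).1
  have hdv1 : Differentiable ℝ (deriv v) := (contDiff_one_iff_deriv.mp h1).1
  have hddvC : Continuous (deriv (deriv v)) := (contDiff_one_iff_deriv.mp h1).2
  have hvC : Continuous v := hv.continuous
  have hdvC : Continuous (deriv v) := h1.continuous
  have huC : Continuous u := hu.continuous
  have hcm : Continuous (fun x : ℝ => c * x) := continuous_const.mul continuous_id
  have hφC : Continuous (fun x : ℝ => Real.sin (c*x)) := Real.continuous_sin.comp hcm
  have hφ1C : Continuous (fun x : ℝ => Real.cos (c*x) * c) := (Real.continuous_cos.comp hcm).mul continuous_const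
  have hφ2C : Continuous (fun x : ℝ => -Real.sin (c*x) * c * c) := ((Real.continuous_sin.comp hcm).neg.mul continuous_const).mul continuous_const
  have hsinL : Real.sin (c * L) = 0 := by rw [hcL]; exact Real.sin_pi
  have hsin0 : Real.sin (c * 0) = 0 := by simp
  -- first integration by parts
  have ibp1 : (∫ x in (0:ℝ)..L, Real.sin (c*x) * deriv (deriv v) x)
      = - ∫ x in (0:ℝ)..L, (Real.cos (c*x) * c) * deriv v x := by
    rw [integral_mul_deriv_eq_deriv_mul (u' := fun x => Real.cos (c*x) * c)
      (fun x _ => phi_hasDeriv c x) (fun x _ => (hdv1 x).hasDerivAt)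
      (hφ1C.intervalIntegrable 0 L) (hddvC.intervalIntegrable 0 L)]
    rw [hsinL, hsin0]; ring
  have ibp2 : (∫ x in (0:ℝ)..L, (Real.cos (c*x) * c) * deriv v x)
      = - ∫ x in (0:ℝ)..L, (-Real.sin (c*x) * c * c) * v x := by
    rw [integral_mul_deriv_eq_deriv_mul (u' := fun x => -Real.sin (c*x) * c * c)
      (fun x _ => phi1_hasDeriv c x) (fun x _ => (hv1 x).hasDerivAt)
      (hφ2C.intervalIntegrable 0 L) (hdvC.intervalIntegrable 0 L)]
    rw [hb0, hbL]; ring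
  have key1 : (∫ x in (0:ℝ)..L, Real.sin (c*x) * deriv (deriv v) x)
      = - (c * c * ∫ x in (0:ℝ)..L, Real.sin (c*x) * v x) := by
    rw [ibp1, ibp2, neg_neg, ← intervalIntegral.integral_const_mul, ← intervalIntegral.integral_neg]
    congr 1; funext x; ring
  -- use the equation a.e.
  have keq : (∫ x in (0:ℝ)..L, d2 * (Real.sin (c*x) * deriv (deriv v) x))
      = ∫ x in (0:ℝ)..L,
        (-(a * (Real.sin (c*x) * v x)) + (Real.sin (c*x) * v x ^ 2
          + k2 * (Real.sin (c*x) * (v x * u x)))) := by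
    apply intervalIntegral.integral_congr_ae
    have hLnull : ∀ᵐ x : ℝ, x ≠ L := by
      have : (volume : Measure ℝ) {L} = 0 := measure_singleton L
      exact MeasureTheory.compl_mem_ae_iff.mpr this
    filter_upwards [hLnull] with x hx hxI
    rw [uIoc_of_le hL.le] at hxI
    have hxo : x ∈ Ioo (0:ℝ) L := ⟨hxI.1, lt_of_le_of_ne hxI.2 hx⟩
    have := heq x hxo
    have hdd : d2 * deriv (deriv v) x = -(v x * (a - v x - k2 * u x)) := by linarith
    calc d2 * (Real.sin (c*x) * deriv (deriv v) x)
        = Real.sin (c*x) * (d2 * deriv (deriv v) x) := by ring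
      _ = Real.sin (c*x) * (-(v x * (a - v x - k2 * u x))) := by rw [hdd]
      _ = _ := by ring
  -- name the three integrals
  set Iv := ∫ x in (0:ℝ)..L, Real.sin (c*x) * v x with hIv
  set Iv2 := ∫ x in (0:ℝ)..L, Real.sin (c*x) * v x ^ 2 with hIv2
  set Ivu := ∫ x in (0:ℝ)..L, Real.sin (c*x) * (v x * u x) with hIvu
  have hint1 : IntervalIntegrable (fun x => Real.sin (c*x) * v x) volume 0 L :=
    (hφC.mul hvC).intervalIntegrable 0 L
  have hint2 : IntervalIntegrable (fun x => Real.sin (c*x) * v x ^ 2) volume 0 L :=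
    (hφC.mul (hvC.pow 2)).intervalIntegrable 0 L
  have hint3 : IntervalIntegrable (fun x => Real.sin (c*x) * (v x * u x)) volume 0 L :=
    (hφC.mul (hvC.mul huC)).intervalIntegrable 0 L
  have hrhs : (∫ x in (0:ℝ)..L,
        (-(a * (Real.sin (c*x) * v x)) + (Real.sin (c*x) * v x ^ 2
          + k2 * (Real.sin (c*x) * (v x * u x)))))
      = -(a * Iv) + (Iv2 + k2 * Ivu) := by
    have hintA : IntervalIntegrable (fun x => -(a * (Real.sin (c*x) * v x))) volume 0 L :=
      ((continuous_const.mul (hφC.mul hvC)).neg).intervalIntegrable 0 L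
    have hintK : IntervalIntegrable (fun x => k2 * (Real.sin (c*x) * (v x * u x))) volume 0 L :=
      (continuous_const.mul (hφC.mul (hvC.mul huC))).intervalIntegrable 0 L
    rw [intervalIntegral.integral_add hintA (hint2.add hintK),
      intervalIntegral.integral_add hint2 hintK,
      intervalIntegral.integral_neg, intervalIntegral.integral_const_mul,
      intervalIntegral.integral_const_mul]
  have hlhs : (∫ x in (0:ℝ)..L, d2 * (Real.sin (c*x) * deriv (deriv v) x))
      = -(d2 * (c * c * Iv)) := by
    rw [intervalIntegral.integral_const_mul, key1]; ring
  have hmain : -(d2 * (c * c * Iv)) = -(a * Iv) + (Iv2 + k2 * Ivu) := by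
    rw [← hlhs, ← hrhs, keq]
  -- sign facts
  have hφnn : ∀ x ∈ Icc (0:ℝ) L, 0 ≤ Real.sin (c*x) := by
    intro x hx
    apply Real.sin_nonneg_of_nonneg_of_le_pi (mul_nonneg hc.le hx.1)
    calc c * x ≤ c * L := by nlinarith [hx.2]
      _ = π := hcL
  have hIvnn : 0 ≤ Iv := intervalIntegral.integral_nonneg hL.le
    (fun x hx => mul_nonneg (hφnn x hx) (hv0 x hx))
  have hIvunn : 0 ≤ Ivu := intervalIntegral.integral_nonneg hL.le
    (fun x hx => mul_nonneg (hφnn x hx) (mul_nonneg (hv0 x hx) (hu0 x hx)))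
  have hIv2nn : 0 ≤ Iv2 := intervalIntegral.integral_nonneg hL.le
    (fun x hx => mul_nonneg (hφnn x hx) (sq_nonneg _))
  -- eigenvalue bound: a ≤ d2 * c^2
  have hac : a ≤ d2 * (c * c) := by
    have hda : (0:ℝ) ≤ d2 / a := by positivity
    have hsq : L ^ 2 ≤ (d2 / a) * π ^ 2 := by
      have := mul_self_le_mul_self hL.le hLle
      calc L ^ 2 = L * L := sq L
        _ ≤ (Real.sqrt (d2/a) * π) * (Real.sqrt (d2/a) * π) := this
        _ = Real.sqrt (d2/a) ^ 2 * π ^ 2 := by ring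
        _ = (d2 / a) * π ^ 2 := by rw [Real.sq_sqrt hda]
    have haL : a * L ^ 2 ≤ d2 * π ^ 2 := by
      have := mul_le_mul_of_nonneg_left hsq ha.le
      calc a * L ^ 2 ≤ a * ((d2/a) * π ^ 2) := this
        _ = d2 * π ^ 2 := by field_simp
    have hc2 : c * c = π ^ 2 / L ^ 2 := by
      rw [hcdef]; field_simp
    rw [hc2, ← mul_div_assoc, le_div_iff₀ (by positivity)]
    linarith
  -- conclude Iv2 = 0
  have hIv2zero : Iv2 = 0 := by nlinarith
  -- pointwise conclusion
  intro x0 hx0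
  by_contra hne
  have hvx0 : 0 < v x0 := lt_of_le_of_ne (hv0 x0 hx0) (Ne.symm hne)
  have hx0i : x0 ∈ Ioo (0:ℝ) L := by
    rcases hx0 with ⟨g1, g2⟩
    refine ⟨g1.lt_of_ne ?_, g2.lt_of_ne ?_⟩
    · rintro rfl; rw [hb0] at hvx0; exact lt_irrefl 0 hvx0
    · rintro rfl; rw [hbL] at hvx0; exact lt_irrefl 0 hvx0
  have hpos : 0 < Iv2 := by
    rw [hIv2, intervalIntegral.integral_pos_iff_support_of_nonneg_ae' ?_ hint2]
    · refine ⟨hL, ?_⟩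
      have hUopen : IsOpen ((fun x => Real.sin (c*x) * v x ^ 2) ⁻¹' Ioi 0 ∩ Ioo 0 L) :=
        ((hφC.mul (hvC.pow 2)).isOpen_preimage _ isOpen_Ioi).inter isOpen_Ioo
      have hx0mem : x0 ∈ (fun x => Real.sin (c*x) * v x ^ 2) ⁻¹' Ioi 0 ∩ Ioo 0 L := by
        refine ⟨?_, hx0i⟩
        have hφpos : 0 < Real.sin (c * x0) := by
          apply Real.sin_pos_of_pos_of_lt_pi (mul_pos hc hx0i.1)
          calc c * x0 < c * L := by nlinarith [hx0i.2]
            _ = π := hcL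
        exact mul_pos hφpos (pow_pos hvx0 2)
      refine lt_of_lt_of_le (hUopen.measure_pos volume ⟨x0, hx0mem⟩) (measure_mono ?_)
      rintro y ⟨hy1, hy2⟩
      exact ⟨ne_of_gt hy1, Ioo_subset_Ioc_self hy2⟩
    · rw [uIoc_of_le hL.le]
      refine (MeasureTheory.ae_restrict_iff' measurableSet_Ioc).2 (ae_of_all _ ?_)
      intro x hx
      exact mul_nonneg (hφnn x (Ioc_subset_Icc_self hx)) (sq_nonneg _)
  rw [hIv2zero] at hpos
  exact lt_irrefl 0 hpos
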